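/- If μ₂ is a measure on iℝ with density dμ₂/|dz| ≤ a/π (a > 0), then the function x ↦ -a√x - U^{μ₂}(√x) is convex on (0,∞); consequently, if additionally x ↦ V(√x) is convex on (0,∞), then x ↦ V(√x) - a√x - U^{μ₂}(√x) is convex on (0,∞). -/

import Mathlib

open MeasureTheory Real Filter Topology

lemma logratio_abs_le (p : ℝ) (hp : 0 < p) (u : ℝ) :
    |Real.log (p + u ^ 2) - Real.log (1 + u ^ 2)| ≤
      (|p - 1| * (1 + p) / p) * (1 + u ^ 2)⁻¹ := by
  have hA : 0 < p + u ^ 2 := by positivity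
  have hB : 0 < 1 + u ^ 2 := by positivity
  have h1 : Real.log (p + u ^ 2) - Real.log (1 + u ^ 2) ≤ (p - 1) / (1 + u ^ 2) := by
    rw [← Real.log_div (ne_of_gt hA) (ne_of_gt hB)]
    have h := Real.log_le_sub_one_of_pos (div_pos hA hB)
    have heq : (p + u ^ 2) / (1 + u ^ 2) - 1 = (p - 1) / (1 + u ^ 2) := by field_simp; ring
    linarith [heq ▸ h]
  have h2 : Real.log (1 + u ^ 2) - Real.log (p + u ^ 2) ≤ (1 - p) / (p + u ^ 2) := by
    rw [← Real.log_div (ne_of_gt hB) (ne_of_gt hA)]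
    have h := Real.log_le_sub_one_of_pos (div_pos hB hA)
    have heq : (1 + u ^ 2) / (p + u ^ 2) - 1 = (1 - p) / (p + u ^ 2) := by field_simp; ring
    linarith [heq ▸ h]
  have hR : (|p - 1| * (1 + p) / p) * (1 + u ^ 2)⁻¹
      = (|p - 1| * (1 + p)) / (p * (1 + u ^ 2)) := by
    field_simp
  rw [hR, abs_le]
  constructor
  · have hkey : (1 - p) / (p + u ^ 2) ≤ (|p - 1| * (1 + p)) / (p * (1 + u ^ 2)) := by
      rw [div_le_div_iff₀ hA (by positivity)]
      rcases le_or_gt p 1 with hp1 | hp1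
      · have habs1 : |p - 1| = 1 - p := by rw [abs_of_nonpos (by linarith)]; ring
        rw [habs1]
        nlinarith [sq_nonneg u, sq_nonneg p,
          mul_nonneg (sub_nonneg.2 hp1) (add_nonneg (sq_nonneg p) (sq_nonneg u))]
      · have hR0 : 0 ≤ |p - 1| * (1 + p) * (p + u ^ 2) :=
          mul_nonneg (mul_nonneg (abs_nonneg _) (by linarith)) hA.le
        nlinarith [mul_pos (show (0:ℝ) < p - 1 by linarith) (mul_pos hp hB)]
    linarith
  · have hkey : (p - 1) / (1 + u ^ 2) ≤ (|p - 1| * (1 + p)) / (p * (1 + u ^ 2)) := by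
      rw [div_le_div_iff₀ hB (by positivity)]
      have h1 : p - 1 ≤ |p - 1| := le_abs_self _
      have key := mul_le_mul_of_nonneg_right
        (mul_le_mul h1 (by linarith : p ≤ 1 + p) hp.le (abs_nonneg _)) hB.le
      nlinarith [key]
    linarith

lemma logratio_integrable (p : ℝ) (hp : 0 < p) :
    Integrable (fun u : ℝ => Real.log (p + u ^ 2) - Real.log (1 + u ^ 2)) := by
  have hmeas : AEStronglyMeasurable
      (fun u : ℝ => Real.log (p + u ^ 2) - Real.log (1 + u ^ 2)) volume :=
    Measurable.aestronglyMeasurable <|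
      (Real.measurable_log.comp (measurable_const.add (measurable_id.pow_const 2))).sub
      (Real.measurable_log.comp (measurable_const.add (measurable_id.pow_const 2)))
  exact (integrable_inv_one_add_sq.const_mul (|p - 1| * (1 + p) / p)).mono' hmeas
    (Filter.Eventually.of_forall fun u => by
      simpa using logratio_abs_le p hp u)

lemma tendsto_mul_logratio_atTop (p : ℝ) (hp : 0 < p) :
    Tendsto (fun u : ℝ => u * (Real.log (p + u ^ 2) - Real.log (1 + u ^ 2)))
      atTop (𝓝 0) := by
  set C := |p - 1| * (1 + p) / p with hC
  have hC0 : 0 ≤ C := by positivity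
  rw [tendsto_zero_iff_abs_tendsto_zero]
  apply squeeze_zero' (Eventually.of_forall fun u => abs_nonneg _)
    (g := fun u => C / u)
  · filter_upwards [eventually_ge_atTop (1 : ℝ)] with u hu
    have hu0 : 0 < u := by linarith
    rw [abs_mul, abs_of_pos hu0]
    calc u * |Real.log (p + u ^ 2) - Real.log (1 + u ^ 2)|
        ≤ u * (C * (1 + u ^ 2)⁻¹) :=
          mul_le_mul_of_nonneg_left (logratio_abs_le p hp u) hu0.le
      _ = u * C / (1 + u ^ 2) := by ring
      _ ≤ C / u := by
          rw [div_le_div_iff₀ (by positivity) hu0]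
          nlinarith
  · exact tendsto_const_nhds.div_atTop tendsto_id

lemma logratio_integral (p : ℝ) (hp : 0 < p) :
    ∫ u : ℝ, (Real.log (p + u ^ 2) - Real.log (1 + u ^ 2))
      = 2 * π * (Real.sqrt p - 1) := by
  have hs : 0 < Real.sqrt p := Real.sqrt_pos.2 hp
  set F : ℝ → ℝ := fun u => u * (Real.log (p + u ^ 2) - Real.log (1 + u ^ 2))
      + (2 * Real.sqrt p * Real.arctan (u / Real.sqrt p) - 2 * Real.arctan u) with hF
  have hderiv : ∀ u : ℝ,
      HasDerivAt F (Real.log (p + u ^ 2) - Real.log (1 + u ^ 2)) u := by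
    intro u
    have hA : (0:ℝ) < p + u ^ 2 := by positivity
    have hB : (0:ℝ) < 1 + u ^ 2 := by positivity
    have hpow : HasDerivAt (fun u : ℝ => u ^ 2) (2 * u) u := by
      simpa using hasDerivAt_pow 2 u
    have hlog1 : HasDerivAt (fun u : ℝ => Real.log (p + u ^ 2))
        ((2 * u) / (p + u ^ 2)) u := (hpow.const_add p).log hA.ne'
    have hlog2 : HasDerivAt (fun u : ℝ => Real.log (1 + u ^ 2))
        ((2 * u) / (1 + u ^ 2)) u := (hpow.const_add 1).log hB.ne'
    have harc1 : HasDerivAt (fun u : ℝ => Real.arctan (u / Real.sqrt p))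
        ((1 / (1 + (u / Real.sqrt p) ^ 2)) * (1 / Real.sqrt p)) u := by
      have := (Real.hasDerivAt_arctan (u / Real.sqrt p)).comp u
        ((hasDerivAt_id u).div_const (Real.sqrt p))
      exact this
    have hmain := ((hasDerivAt_id u).mul (hlog1.sub hlog2)).add
      ((harc1.const_mul (2 * Real.sqrt p)).sub ((Real.hasDerivAt_arctan u).const_mul 2))
    refine hmain.congr_deriv ?_
    have h1 : (u / Real.sqrt p) ^ 2 = u ^ 2 / p := by
      rw [div_pow, Real.sq_sqrt hp.le]
    rw [h1]; simp only [Pi.sub_apply, id_eq]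
    have h2 : Real.sqrt p * Real.sqrt p = p := Real.mul_self_sqrt hp.le
    field_simp
    ring
  have htop : Tendsto F atTop (𝓝 (π * Real.sqrt p - π)) := by
    have t1 := tendsto_mul_logratio_atTop p hp
    have t2 : Tendsto (fun u : ℝ => Real.arctan (u / Real.sqrt p)) atTop (𝓝 (π / 2)) :=
      (tendsto_nhds_of_tendsto_nhdsWithin Real.tendsto_arctan_atTop).comp
        (tendsto_id.atTop_div_const hs)
    have t3 : Tendsto (fun u : ℝ => Real.arctan u) atTop (𝓝 (π / 2)) :=
      tendsto_nhds_of_tendsto_nhdsWithin Real.tendsto_arctan_atTop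
    have := t1.add (((t2.const_mul (2 * Real.sqrt p)).sub (t3.const_mul 2)))
    convert this using 1
    ring
  have hFodd : ∀ u : ℝ, F u = -F (-u) := by
    intro u
    simp only [hF, neg_sq, neg_div, Real.arctan_neg]
    ring
  have hbot : Tendsto F atBot (𝓝 (-(π * Real.sqrt p - π))) := by
    have := (htop.comp tendsto_neg_atBot_atTop).neg
    exact this.congr fun u => (hFodd u).symm
  have := MeasureTheory.integral_of_hasDerivAt_of_tendsto hderiv
    (logratio_integrable p hp) hbot htop
  rw [this]; ring

/-- If `μ₂` is a finite measure on the imaginary axis (identified with `ℝ`) with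
density at most `a/π` with respect to Lebesgue measure, then
`x ↦ -a√x - U^{μ₂}(√x) = -a√x + (1/2) ∫ log(x+y²) dμ₂(y)` is convex on `(0,∞)`;
consequently if moreover `x ↦ V(√x)` is convex on `(0,∞)` then
`x ↦ V(√x) - a√x - U^{μ₂}(√x)` is convex on `(0,∞)`. -/
theorem external_field_convex (a : ℝ) (ha : 0 < a)
    (μ₂ : Measure ℝ) [IsFiniteMeasure μ₂]
    (hdens : μ₂ ≤ ENNReal.ofReal (a / π) • volume)
    (hint : ∀ x : ℝ, 0 < x → Integrable (fun y => Real.log (x + y ^ 2)) μ₂)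
    (V : ℝ → ℝ) :
    ConvexOn ℝ (Set.Ioi 0)
      (fun x => -a * Real.sqrt x + (1 / 2) * ∫ y, Real.log (x + y ^ 2) ∂μ₂)
    ∧ (ConvexOn ℝ (Set.Ioi 0) (fun x => V (Real.sqrt x)) →
        ConvexOn ℝ (Set.Ioi 0)
          (fun x => V (Real.sqrt x) - a * Real.sqrt x
              + (1 / 2) * ∫ y, Real.log (x + y ^ 2) ∂μ₂)) := by
  have hπ : (0:ℝ) < π := Real.pi_pos
  have hconv : ConvexOn ℝ (Set.Ioi 0)
      (fun x => -a * Real.sqrt x + (1 / 2) * ∫ y, Real.log (x + y ^ 2) ∂μ₂) := by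
    refine ⟨convex_Ioi 0, ?_⟩
    intro x hx y hy t s ht hs hts
    simp only [smul_eq_mul]
    have hx0 : (0:ℝ) < x := hx
    have hy0 : (0:ℝ) < y := hy
    set z := t * x + s * y with hz
    have hz0 : 0 < z := by
      nlinarith [mul_le_mul_of_nonneg_left (min_le_left x y) ht,
        mul_le_mul_of_nonneg_left (min_le_right x y) hs, lt_min hx0 hy0]
    set h : ℝ → ℝ := fun u =>
      Real.log (z + u ^ 2) - t * Real.log (x + u ^ 2) - s * Real.log (y + u ^ 2) with hh
    -- nonnegativity of h by concavity of log
    have hpos : ∀ u : ℝ, 0 ≤ h u := by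
      intro u
      have hcc := (strictConcaveOn_log_Ioi.concaveOn).2
        (Set.mem_Ioi.2 (by positivity : (0:ℝ) < x + u ^ 2))
        (Set.mem_Ioi.2 (by positivity : (0:ℝ) < y + u ^ 2)) ht hs hts
      simp only [smul_eq_mul] at hcc
      have heq : t * (x + u ^ 2) + s * (y + u ^ 2) = z + u ^ 2 := by
        rw [hz]; linear_combination u ^ 2 * hts
      rw [heq] at hcc
      simp only [hh]; linarith
    -- integrability with respect to μ₂
    have hμz := hint z hz0
    have hμx := hint x hx0
    have hμy := hint y hy0
    have hμxt : Integrable (fun u => t * Real.log (x + u ^ 2)) μ₂ := hμx.const_mul t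
    have hμys : Integrable (fun u => s * Real.log (y + u ^ 2)) μ₂ := hμy.const_mul s
    have hμzx : Integrable (fun u => Real.log (z + u ^ 2) - t * Real.log (x + u ^ 2)) μ₂ :=
      hμz.sub hμxt
    have hhμ : Integrable h μ₂ := hμzx.sub hμys
    have hμint : ∫ u, h u ∂μ₂ = (∫ u, Real.log (z + u ^ 2) ∂μ₂)
        - t * (∫ u, Real.log (x + u ^ 2) ∂μ₂) - s * (∫ u, Real.log (y + u ^ 2) ∂μ₂) := by
      simp only [hh]
      rw [integral_sub hμzx hμys, integral_sub hμz hμxt, integral_const_mul,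
        integral_const_mul]
    -- integrability and value with respect to volume
    have hptg : ∀ u : ℝ, h u =
        (Real.log (z + u ^ 2) - Real.log (1 + u ^ 2))
        - t * (Real.log (x + u ^ 2) - Real.log (1 + u ^ 2))
        - s * (Real.log (y + u ^ 2) - Real.log (1 + u ^ 2)) := by
      intro u; simp only [hh]; linear_combination (- Real.log (1 + u ^ 2)) * hts
    have hvxt : Integrable (fun u : ℝ =>
        t * (Real.log (x + u ^ 2) - Real.log (1 + u ^ 2))) volume :=
      (logratio_integrable x hx0).const_mul t
    have hvys : Integrable (fun u : ℝ =>
        s * (Real.log (y + u ^ 2) - Real.log (1 + u ^ 2))) volume :=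
      (logratio_integrable y hy0).const_mul s
    have hvzx : Integrable (fun u : ℝ =>
        (Real.log (z + u ^ 2) - Real.log (1 + u ^ 2))
        - t * (Real.log (x + u ^ 2) - Real.log (1 + u ^ 2))) volume :=
      (logratio_integrable z hz0).sub hvxt
    have hgvol : Integrable (fun u : ℝ =>
        (Real.log (z + u ^ 2) - Real.log (1 + u ^ 2))
        - t * (Real.log (x + u ^ 2) - Real.log (1 + u ^ 2))
        - s * (Real.log (y + u ^ 2) - Real.log (1 + u ^ 2))) volume :=
      hvzx.sub hvys
    have hhvol : Integrable h volume := hgvol.congr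
      (Filter.Eventually.of_forall fun u => (hptg u).symm)
    have hvolint : ∫ u, h u
        = 2 * π * (Real.sqrt z - t * Real.sqrt x - s * Real.sqrt y) := by
      rw [integral_congr_ae (Filter.Eventually.of_forall hptg),
        integral_sub hvzx hvys,
        integral_sub (logratio_integrable z hz0) hvxt,
        integral_const_mul, integral_const_mul,
        logratio_integral z hz0, logratio_integral x hx0, logratio_integral y hy0]
      linear_combination (2 * π) * hts
    -- comparison of measures
    have hcne : (ENNReal.ofReal (a / π)) ≠ ⊤ := ENNReal.ofReal_ne_top
    have hmono : ∫ u, h u ∂μ₂ ≤ ∫ u, h u ∂(ENNReal.ofReal (a / π) • volume) :=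
      integral_mono_measure hdens (Filter.Eventually.of_forall hpos)
        (hhvol.smul_measure hcne)
    rw [integral_smul_measure, ENNReal.toReal_ofReal (by positivity : (0:ℝ) ≤ a / π),
      hvolint, smul_eq_mul] at hmono
    rw [hμint] at hmono
    have hfin : (a / π) * (2 * π * (Real.sqrt z - t * Real.sqrt x - s * Real.sqrt y))
        = 2 * a * (Real.sqrt z - t * Real.sqrt x - s * Real.sqrt y) := by
      field_simp
    rw [hfin] at hmono
    linarith
  refine ⟨hconv, fun hV => ?_⟩
  have hsum := hV.add hconv
  have heq : (fun x => V (Real.sqrt x) - a * Real.sqrt x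
        + (1 / 2) * ∫ y, Real.log (x + y ^ 2) ∂μ₂)
      = (fun x => V (Real.sqrt x)) + (fun x => -a * Real.sqrt x
        + (1 / 2) * ∫ y, Real.log (x + y ^ 2) ∂μ₂) := by
    funext x; simp only [Pi.add_apply]; ring
  rw [heq]; exact hsum
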